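/- Let H ∈ ℝ^{r×n}, b ∈ ℝ^r define the polytope X = {x | Hx ≤ b}. Let Δ ≥ 0 be an n×p nonnegative matrix and w ∈ ℝ^p a fixed vector. Then the set inclusion z ⊕ [−Δ, Δ]w ⊆ X (i.e., z + Dw ∈ X for all matrices D with |D| ≤ Δ entrywise) holds if and only if Hz + |H| Δ |w| ≤ b, where |H| and |w| denote entrywise absolute values. -/

import Mathlib

/-- Entrywise absolute value of a matrix. -/
def aent {p q : ℕ} (M : Matrix (Fin p) (Fin q) ℝ) : Matrix (Fin p) (Fin q) ℝ :=
  Matrix.of fun i j => |M i j|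

private lemma sign_abs_le' (x : ℝ) : |Real.sign x| ≤ 1 := by
  rcases lt_trichotomy x 0 with h | h | h <;>
    simp [Real.sign_of_neg, Real.sign_of_pos, h]

private lemma mul_sign' (x : ℝ) : x * Real.sign x = |x| := by
  rcases lt_trichotomy x 0 with h | h | h <;>
    simp [Real.sign_of_neg, Real.sign_of_pos, h, abs_of_neg, abs_of_pos, le_of_lt]

/-- For the polytope X = {x | Hx ≤ b}:
z ⊕ [−Δ, Δ]w ⊆ X  ↔  Hz + |H| Δ |w| ≤ b. -/
theorem stmt19 {r n p : ℕ} (H : Matrix (Fin r) (Fin n) ℝ) (b : Fin r → ℝ)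
    (Δ : Matrix (Fin n) (Fin p) ℝ) (hΔ : ∀ i j, 0 ≤ Δ i j)
    (w : Fin p → ℝ) (z : Fin n → ℝ) :
    (∀ D : Matrix (Fin n) (Fin p) ℝ, (∀ i j, |D i j| ≤ Δ i j) →
      ∀ i, H.mulVec (z + D.mulVec w) i ≤ b i) ↔
    ∀ i, H.mulVec z i + ((aent H * Δ).mulVec fun j => |w j|) i ≤ b i := by
  have key : ∀ i, ((aent H * Δ).mulVec fun j => |w j|) i
      = ∑ k, |H i k| * ∑ j, Δ k j * |w j| := by
    intro i
    simp only [Matrix.mulVec, Matrix.mul_apply, aent, Matrix.of_apply, dotProduct,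
      Finset.sum_mul, Finset.mul_sum, mul_assoc]
    rw [Finset.sum_comm]
  constructor
  · intro h i
    have hD : ∀ k j, |(fun k j => Real.sign (H i k) * Δ k j * Real.sign (w j) :
        Matrix (Fin n) (Fin p) ℝ) k j| ≤ Δ k j := by
      intro k j
      simp only [abs_mul]
      calc |Real.sign (H i k)| * |Δ k j| * |Real.sign (w j)|
          ≤ 1 * |Δ k j| * 1 := by
            apply mul_le_mul (mul_le_mul (sign_abs_le' _) le_rfl (abs_nonneg _)
              zero_le_one) (sign_abs_le' _) (abs_nonneg _)
            positivity
        _ = Δ k j := by rw [one_mul, mul_one, abs_of_nonneg (hΔ k j)]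
    have := h _ hD i
    rw [Matrix.mulVec_add] at this
    rw [key]
    refine le_trans (le_of_eq ?_) this
    congr 1
    simp only [Matrix.mulVec, dotProduct, Finset.mul_sum]
    refine Finset.sum_congr rfl fun k _ => ?_
    refine Finset.sum_congr rfl fun j _ => ?_
    rw [← mul_sign' (w j), ← mul_sign' (H i k)]; ring
  · intro h D hD i
    rw [Matrix.mulVec_add]
    refine le_trans (add_le_add_right ?_ _) (h i)
    rw [key]
    simp only [Matrix.mulVec, dotProduct, Finset.mul_sum]
    refine Finset.sum_le_sum fun k _ => ?_
    rw [← Finset.mul_sum]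
    calc H i k * ∑ j, D k j * w j ≤ |H i k * ∑ j, D k j * w j| := le_abs_self _
      _ = |H i k| * |∑ j, D k j * w j| := abs_mul _ _
      _ ≤ |H i k| * ∑ j, Δ k j * |w j| := by
          refine mul_le_mul_of_nonneg_left ?_ (abs_nonneg _)
          refine le_trans (Finset.abs_sum_le_sum_abs _ _) (Finset.sum_le_sum fun j _ => ?_)
          rw [abs_mul]
          exact mul_le_mul_of_nonneg_right (hD k j) (abs_nonneg _)
      _ = ∑ j, |H i k| * (Δ k j * |w j|) := by rw [Finset.mul_sum]
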